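/- arXiv:1711.03515 — 2 statements merged into one kernel-verified Lean document; each statement's English description precedes it below -/
import Mathlib

section
/- Let g ∈ R be a right divisor of x^n − 1 of degree < n, and let C ⊆ L^n be the skew cyclic code it defines. Suppose there exist integers b ≥ 0, δ with 2 ≤ δ ≤ n, and t with gcd(t, n) = 1, such that {b, b+t, b+2t, …, b+(δ−2)t mod n} ⊆ T_β(g). Then the minimum Hamming distance of C is at least δ (BCH bound for skew cyclic codes). -/
/-! Skew polynomials over a field `M` twisted by a ring automorphism `θ` (`x·a = θ(a)·x`),
modeled as finitely supported functions `ℕ →₀ M` (coefficient of `xⁱ` at `i`),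
with left-coefficient multiplication `(Σᵢ aᵢ xⁱ)·(Σⱼ bⱼ xʲ) = Σᵢⱼ aᵢ θⁱ(bⱼ) x^{i+j}`. -/

variable {M : Type*} [Field M]

/-- Multiplication of skew polynomials: `f * g` in `M[x;θ]`. -/
noncomputable def sMul (θ : M ≃+* M) (f g : ℕ →₀ M) : ℕ →₀ M :=
  f.sum fun i a => g.sum fun j b => Finsupp.single (i + j) (a * (θ ^ i) b)

/-- The skew polynomial `x - γ`. -/
noncomputable def Xsub (γ : M) : ℕ →₀ M := Finsupp.single 1 1 - Finsupp.single 0 γ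

/-- The skew polynomial `xⁿ - 1`. -/
noncomputable def XnSubOne (n : ℕ) : ℕ →₀ M := Finsupp.single n 1 - Finsupp.single 0 1

/-- The left ideal `S·f = {q·f : q ∈ S}` of `S = M[x;θ]`. -/
def lIdeal (θ : M ≃+* M) (f : ℕ →₀ M) : Set (ℕ →₀ M) := {h | ∃ q, h = sMul θ q f}

/-- `g` right-divides `f` in `M[x;θ]`, i.e. `f ∈ S·g`. -/
def rdvd (θ : M ≃+* M) (g f : ℕ →₀ M) : Prop := f ∈ lIdeal θ g

/-- The fixed subfield of an automorphism. -/
noncomputable def fixedSubfield (φ : M ≃+* M) : Subfield M where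
  carrier := {a | φ a = a}
  zero_mem' := map_zero φ
  one_mem' := map_one φ
  add_mem' := by intro a b ha hb; simp only [Set.mem_setOf_eq, map_add] at *; rw [ha, hb]
  mul_mem' := by intro a b ha hb; simp only [Set.mem_setOf_eq, map_mul] at *; rw [ha, hb]
  neg_mem' := by intro a ha; simp only [Set.mem_setOf_eq, map_neg] at *; rw [ha]
  inv_mem' := by intro a ha; simp only [Set.mem_setOf_eq, map_inv₀] at *; rw [ha]

/-- A skew polynomial lies in the subring `R` of polynomials whose coefficients are fixed
by the automorphism `φ` (for `φ = θ^μ = π`, this is `R = L[x;σ]` with `L = M^π`). -/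
def inR (φ : M ≃+* M) (f : ℕ →₀ M) : Prop := ∀ j, φ (f j) = f j

/-- The polynomial of degree `< n` with coefficient vector `c`. -/
noncomputable def vecPoly {n : ℕ} (c : Fin n → M) : ℕ →₀ M :=
  ∑ j : Fin n, Finsupp.single (j : ℕ) (c j)

/-- Hamming weight of a vector. -/
noncomputable def hWt {n : ℕ} (c : Fin n → M) : ℕ := Set.ncard {j : Fin n | c j ≠ 0}

/-- `α` generates a normal basis `{α, θ(α), …, θ^{n-1}(α)}` of `M` over `K = M^θ`. -/
def NormalBasis (θ : M ≃+* M) (n : ℕ) (α : M) : Prop :=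
  LinearIndependent (fixedSubfield θ) (fun i : Fin n => (θ ^ (i : ℕ)) α) ∧
    Submodule.span (fixedSubfield θ) (Set.range fun i : Fin n => (θ ^ (i : ℕ)) α) = ⊤

/-- `f` is monic of degree `d`. -/
def IsMonicAt (f : ℕ →₀ M) (d : ℕ) : Prop := f d = 1 ∧ ∀ j, d < j → f j = 0

/-- `f` is monic. -/
def IsMonic (f : ℕ →₀ M) : Prop := ∃ d, IsMonicAt f d

/-- Coefficientwise application of an automorphism to a skew polynomial (`f ↦ f^φ`). -/
noncomputable def pmap (φ : M ≃+* M) (f : ℕ →₀ M) : ℕ →₀ M :=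
  Finsupp.mapRange φ (map_zero φ) f

/-- `N_k(γ) = γ θ(γ) ⋯ θ^{k-1}(γ)` -/
noncomputable def nNorm (θ : M ≃+* M) (γ : M) (k : ℕ) : M :=
  ∏ l ∈ Finset.range k, (θ ^ l) γ

lemma nNorm_zero (θ : M ≃+* M) (γ : M) : nNorm θ γ 0 = 1 := by simp [nNorm]

lemma nNorm_one (θ : M ≃+* M) (γ : M) : nNorm θ γ 1 = γ := by
  simp only [nNorm, Finset.prod_range_one, pow_zero]; rfl

lemma nNorm_add (θ : M ≃+* M) (γ : M) (i j : ℕ) :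
    nNorm θ γ (i + j) = nNorm θ γ i * (θ ^ i) (nNorm θ γ j) := by
  rw [nNorm, Finset.prod_range_add, nNorm, nNorm, map_prod]
  congr 1
  refine Finset.prod_congr rfl fun l _ => ?_
  rw [pow_add]; rfl

noncomputable def evalHom (θ : M ≃+* M) (γ : M) : (ℕ →₀ M) →+ M :=
  Finsupp.liftAddHom fun k => AddMonoidHom.mulRight (nNorm θ γ k)

lemma evalHom_single (θ : M ≃+* M) (γ : M) (k : ℕ) (a : M) :
    evalHom θ γ (Finsupp.single k a) = a * nNorm θ γ k := by
  simp [evalHom]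

lemma evalHom_sMul (θ : M ≃+* M) (γ : M) (f g : ℕ →₀ M) :
    evalHom θ γ (sMul θ f g)
      = f.sum fun i a => a * nNorm θ γ i * (θ ^ i) (evalHom θ γ g) := by
  rw [sMul, map_finsuppSum]
  refine Finsupp.sum_congr fun i _ => ?_
  rw [map_finsuppSum]
  have : evalHom θ γ g = g.sum fun j b => b * nNorm θ γ j := by
    rw [Finsupp.sum]
    conv_lhs => rw [← Finsupp.sum_single g]
    rw [map_finsuppSum, Finsupp.sum]
    exact Finset.sum_congr rfl fun j _ => evalHom_single θ γ j (g j)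
  rw [this, Finsupp.sum, Finsupp.sum, map_sum, Finset.mul_sum]
  refine Finset.sum_congr rfl fun j _ => ?_
  rw [evalHom_single, nNorm_add, map_mul]
  ring

lemma evalHom_sMul_zero (θ : M ≃+* M) (γ : M) (f g : ℕ →₀ M)
    (hg : evalHom θ γ g = 0) : evalHom θ γ (sMul θ f g) = 0 := by
  rw [evalHom_sMul, hg]
  simp [Finsupp.sum]

lemma evalHom_Xsub (θ : M ≃+* M) (γ : M) : evalHom θ γ (Xsub γ) = 0 := by
  rw [Xsub, map_sub, evalHom_single, evalHom_single, nNorm_one, nNorm_zero]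
  ring

lemma evalHom_vecPoly {n : ℕ} (θ : M ≃+* M) (γ : M) (c : Fin n → M) :
    evalHom θ γ (vecPoly c) = ∑ j : Fin n, c j * nNorm θ γ (j : ℕ) := by
  rw [vecPoly, map_sum]
  exact Finset.sum_congr rfl fun j _ => evalHom_single θ γ _ _

lemma nNorm_beta (θ : M ≃+* M) (α : M) (hα0 : ∀ j : ℕ, (θ ^ j) α ≠ 0) (e k : ℕ) :
    nNorm θ ((θ ^ e) (α⁻¹ * θ α)) k = ((θ ^ e) α)⁻¹ * (θ ^ (e + k)) α := by
  induction k with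
  | zero => simp only [nNorm_zero, add_zero]; exact (inv_mul_cancel₀ (hα0 e)).symm
  | succ k ih =>
      have h1 : nNorm θ ((θ ^ e) (α⁻¹ * θ α)) (k + 1)
          = nNorm θ ((θ ^ e) (α⁻¹ * θ α)) k * (θ ^ k) ((θ ^ e) (α⁻¹ * θ α)) := by
        rw [nNorm, Finset.prod_range_succ, nNorm]
      rw [h1, ih]
      have h2 : (θ ^ k) ((θ ^ e) (α⁻¹ * θ α)) = ((θ ^ (e + k)) α)⁻¹ * (θ ^ (e + k + 1)) α := by
        have : (θ ^ k) ((θ ^ e) (α⁻¹ * θ α)) = (θ ^ (e + k)) (α⁻¹ * θ α) := by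
          rw [add_comm e k, pow_add]; rfl
        rw [this, map_mul, map_inv₀]
        congr 1
      rw [h2]
      have hx : (θ ^ (e + k)) α * ((θ ^ (e + k)) α)⁻¹ = 1 := mul_inv_cancel₀ (hα0 (e + k))
      have h3 : e + (k + 1) = e + k + 1 := by omega
      rw [h3]
      calc ((θ ^ e) α)⁻¹ * (θ ^ (e + k)) α * (((θ ^ (e + k)) α)⁻¹ * (θ ^ (e + k + 1)) α)
          = ((θ ^ e) α)⁻¹ * (((θ ^ (e + k)) α * ((θ ^ (e + k)) α)⁻¹) * (θ ^ (e + k + 1)) α) := by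
            ring
        _ = ((θ ^ e) α)⁻¹ * (θ ^ (e + k + 1)) α := by rw [hx, one_mul]

/-- Fixed points propagate to powers. -/
lemma fixed_pow (φ : M ≃+* M) (a : M) (h : φ a = a) : ∀ u : ℕ, (φ ^ u) a = a := by
  intro u
  induction u with
  | zero => rfl
  | succ u ih => rw [pow_succ]; show (φ ^ u) (φ a) = a; rw [h, ih]

/-- Moore-matrix nonsingularity over the fixed field, phrased as: if a family is
"independent with φ-fixed coefficients" then the only solution of the Moore system
is zero. -/
lemma moore (φ : M ≃+* M) {ι : Type*} [DecidableEq ι] :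
    ∀ (w : ℕ) (v : ι → M),
      (∀ (T : Finset ι) (k : ι → M), (∀ m, φ (k m) = k m) →
        (∑ m ∈ T, k m * v m) = 0 → ∀ m ∈ T, k m = 0) →
      ∀ T : Finset ι, T.card = w → ∀ d : ι → M,
        (∀ i < w, ∑ m ∈ T, d m * (φ ^ i) (v m) = 0) → ∀ m ∈ T, d m = 0 := by
  intro w
  induction w with
  | zero =>
      intro v hv T hT d hd m hm
      rw [Finset.card_eq_zero] at hT
      simp [hT] at hm
  | succ w ih =>
      intro v hv T hT d hd
      by_contra hne
      push_neg at hne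
      obtain ⟨m0, hm0T, hm00⟩ := hne
      set d' : ι → M := fun m => d m / d m0 with hd'def
      have hd'eq : ∀ i < w + 1, ∑ m ∈ T, d' m * (φ ^ i) (v m) = 0 := by
        intro i hi
        have h1 : ∑ m ∈ T, d' m * (φ ^ i) (v m)
            = (d m0)⁻¹ * ∑ m ∈ T, d m * (φ ^ i) (v m) := by
          rw [Finset.mul_sum]
          refine Finset.sum_congr rfl fun m _ => ?_
          simp only [hd'def, div_eq_mul_inv]; ring
        rw [h1, hd i hi, mul_zero]
      set e : ι → M := fun m => φ (d' m) - d' m with he_def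
      have hem0 : e m0 = 0 := by
        simp only [he_def, hd'def, div_self hm00, map_one, sub_self]
      have he : ∀ i < w, ∑ m ∈ T.erase m0, e m * (φ ^ i) (φ (v m)) = 0 := by
        intro i hi
        have h2 : ∑ m ∈ T.erase m0, e m * (φ ^ i) (φ (v m))
            = ∑ m ∈ T, e m * (φ ^ i) (φ (v m)) :=
          Finset.sum_erase T (by rw [hem0, zero_mul])
        have h3 : ∀ m, (φ ^ i) (φ (v m)) = (φ ^ (i + 1)) (v m) := fun m => by
          rw [pow_succ]; rfl
        have h4 : ∑ m ∈ T, φ (d' m) * (φ ^ (i + 1)) (v m) = 0 := by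
          have h5 : ∀ m, φ (d' m) * (φ ^ (i + 1)) (v m) = φ (d' m * (φ ^ i) (v m)) := by
            intro m
            rw [map_mul]
            congr 1
            rw [pow_succ']; rfl
          calc ∑ m ∈ T, φ (d' m) * (φ ^ (i + 1)) (v m)
              = φ (∑ m ∈ T, d' m * (φ ^ i) (v m)) := by
                rw [map_sum]; exact Finset.sum_congr rfl fun m _ => h5 m
            _ = 0 := by rw [hd'eq i (by omega), map_zero]
        rw [h2]
        calc ∑ m ∈ T, e m * (φ ^ i) (φ (v m))
            = ∑ m ∈ T, (φ (d' m) * (φ ^ (i + 1)) (v m) - d' m * (φ ^ (i + 1)) (v m)) := by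
              refine Finset.sum_congr rfl fun m _ => ?_
              rw [h3 m, he_def, sub_mul]
          _ = 0 := by
              rw [Finset.sum_sub_distrib, h4, hd'eq (i + 1) (by omega), sub_zero]
      have hv' : ∀ (T' : Finset ι) (k : ι → M), (∀ m, φ (k m) = k m) →
          (∑ m ∈ T', k m * φ (v m)) = 0 → ∀ m ∈ T', k m = 0 := by
        intro T' k hk hsum m hm
        have hsum2 : ∑ m ∈ T', k m * v m = 0 := by
          have : φ.symm (∑ m ∈ T', k m * φ (v m)) = ∑ m ∈ T', k m * v m := by
            rw [map_sum]
            refine Finset.sum_congr rfl fun m _ => ?_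
            rw [map_mul, RingEquiv.symm_apply_apply]
            congr 1
            conv_lhs => rw [← hk m]
            exact φ.symm_apply_apply (k m)
          rw [← this, hsum, map_zero]
        exact hv T' k hk hsum2 m hm
      have hecard : (T.erase m0).card = w := by
        rw [Finset.card_erase_of_mem hm0T, hT]; omega
      have hzero := ih (fun m => φ (v m)) hv' (T.erase m0) hecard e he
      have hfix : ∀ m ∈ T, φ (d' m) = d' m := by
        intro m hm
        by_cases h : m = m0
        · subst h; simp only [hd'def, div_self hm00, map_one]
        · have := hzero m (Finset.mem_erase.mpr ⟨h, hm⟩)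
          simpa only [he_def, sub_eq_zero] using this
      have hsum0 : ∑ m ∈ T, (fun m => if m ∈ T then d' m else 0) m * v m = 0 := by
        have h := hd'eq 0 (by omega)
        calc ∑ m ∈ T, (fun m => if m ∈ T then d' m else 0) m * v m
            = ∑ m ∈ T, d' m * (φ ^ 0) (v m) := by
              refine Finset.sum_congr rfl fun m hm => ?_
              simp only [if_pos hm, pow_zero]; rfl
          _ = 0 := h
      have hfix2 : ∀ m, φ ((fun m => if m ∈ T then d' m else 0) m) = (if m ∈ T then d' m else 0) := by
        intro m
        by_cases h : m ∈ T
        · simp only [if_pos h]; exact hfix m h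
        · simp only [if_neg h, map_zero]
      have := hv T _ hfix2 hsum0 m0 hm0T
      rw [if_pos hm0T] at this
      exact hm00 (by
        have : d m0 / d m0 = 0 := this
        rw [div_self hm00] at this
        exact absurd this one_ne_zero)


/-- **BCH bound for skew cyclic codes.**
Setting as in the Hartmann–Tzeng bound: `θ` of order `n = μ·s`, `L = M^{θ^μ}`, `R = L[x;σ]`,
`α` generating a normal basis of `M/K` and `β = α⁻¹θ(α)`. If `g ∈ R` is a right divisor of
`xⁿ - 1` of degree `< n` and there are `b ≥ 0`, `2 ≤ δ ≤ n` and `t` with `gcd(t, n) = 1` such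
that `{b, b+t, …, b+(δ-2)t mod n} ⊆ T_β(g)`, then every nonzero codeword of the skew cyclic
code `C ⊆ Lⁿ` defined by `g` has Hamming weight at least `δ`. -/
theorem bch_bound_skew {M : Type*} [Field M] (θ : M ≃+* M) (μ s n : ℕ)
    (hμ : 0 < μ) (hs : 0 < s) (hn : n = μ * s) (hord : orderOf θ = n)
    (α : M) (hα : NormalBasis θ n α) (β : M) (hβ : β = α⁻¹ * θ α)
    (g : ℕ →₀ M) (hgR : inR (θ ^ μ) g)
    (hgdvd : rdvd θ g (XnSubOne n)) (hgdeg : ∀ j, n ≤ j → g j = 0)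
    (b δ t : ℕ) (hδ : 2 ≤ δ) (hδn : δ ≤ n) (ht : Nat.gcd t n = 1)
    (hT : ∀ i ≤ δ - 2, rdvd θ (Xsub ((θ ^ ((b + i * t) % n)) β)) g)
    (c : Fin n → M) (hcL : ∀ j, (θ ^ μ) (c j) = c j)
    (hcC : rdvd θ g (vecPoly c)) (hc0 : c ≠ 0) :
    δ ≤ hWt c := by
  classical
  have hn2 : 2 ≤ n := le_trans hδ hδn
  have hα0 : α ≠ 0 := by
    have h := hα.1.ne_zero (⟨0, by omega⟩ : Fin n)
    simpa using h
  have hθα0 : ∀ j : ℕ, (θ ^ j) α ≠ 0 := by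
    intro j h
    exact hα0 ((θ ^ j).injective (by rw [h, map_zero]))
  -- the evaluation equations coming from the defining set
  have key : ∀ i, i ≤ δ - 2 → ∑ j : Fin n, c j * (θ ^ (b + i * t + (j : ℕ))) α = 0 := by
    intro i hi
    obtain ⟨p, hp⟩ := hT i hi
    obtain ⟨q, hq⟩ := hcC
    set e := (b + i * t) % n with he
    have hEg : evalHom θ ((θ ^ e) β) g = 0 := by
      rw [hp]; exact evalHom_sMul_zero θ _ p _ (evalHom_Xsub θ _)
    have hEc : evalHom θ ((θ ^ e) β) (vecPoly c) = 0 := by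
      rw [hq]; exact evalHom_sMul_zero θ _ q g hEg
    rw [evalHom_vecPoly] at hEc
    have hpe : (θ : M ≃+* M) ^ e = θ ^ (b + i * t) := by
      rw [he, ← hord]; exact pow_mod_orderOf θ (b + i * t)
    have hEc' : ∑ j : Fin n,
        c j * (((θ ^ (b + i * t)) α)⁻¹ * (θ ^ (b + i * t + (j : ℕ))) α) = 0 := by
      rw [← hEc]
      refine Finset.sum_congr rfl fun j _ => ?_
      congr 1
      rw [hβ, nNorm_beta θ α hθα0 e (j : ℕ), hpe]
      have h4 : (θ : M ≃+* M) ^ (e + (j : ℕ)) = θ ^ (b + i * t + (j : ℕ)) := by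
        rw [pow_add, hpe, ← pow_add]
      rw [h4]
    have hK := hθα0 (b + i * t)
    calc ∑ j : Fin n, c j * (θ ^ (b + i * t + (j : ℕ))) α
        = (θ ^ (b + i * t)) α *
            ∑ j : Fin n, c j * (((θ ^ (b + i * t)) α)⁻¹ * (θ ^ (b + i * t + (j : ℕ))) α) := by
          rw [Finset.mul_sum]
          refine Finset.sum_congr rfl fun j _ => ?_
          field_simp
      _ = 0 := by rw [hEc', mul_zero]
  -- fixed points of θ^t are fixed by θ
  have hfixθ : ∀ a : M, (θ ^ t) a = a → θ a = a := by
    intro a ha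
    obtain ⟨m, -, hm⟩ := Nat.exists_mul_mod_eq_one_of_coprime ht (by omega)
    have h1 : (θ : M ≃+* M) ^ (t * m) = θ := by
      rw [← pow_mod_orderOf, hord, hm, pow_one]
    have h2 : ((θ ^ t) ^ m) a = a := fixed_pow (θ ^ t) a ha m
    rw [← pow_mul] at h2
    rw [← h1]
    exact h2
  -- usable form of normal-basis independence for the shifted family
  have hNB : ∀ k : Fin n → M, (∀ m, θ (k m) = k m) →
      (∑ m : Fin n, k m * (θ ^ (b + (m : ℕ))) α = 0) → ∀ m, k m = 0 := by
    intro k hk hsum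
    have hπinj : Function.Injective
        (fun j : Fin n => (⟨(b + (j : ℕ)) % n, Nat.mod_lt _ (by omega)⟩ : Fin n)) := by
      intro j1 j2 h
      simp only [Fin.mk.injEq] at h
      have h1 : (b + (j1 : ℕ)) % n = (b + (j2 : ℕ)) % n := h
      have h2 : (j1 : ℕ) % n = (j2 : ℕ) % n := Nat.ModEq.add_left_cancel' b h1
      have h3 : (j1 : ℕ) = (j2 : ℕ) := by
        rwa [Nat.mod_eq_of_lt j1.isLt, Nat.mod_eq_of_lt j2.isLt] at h2
      exact Fin.ext h3
    have hLI : LinearIndependent (fixedSubfield θ)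
        (fun j : Fin n => (θ ^ ((b + (j : ℕ)) % n)) α) :=
      hα.1.comp (fun j : Fin n => (⟨(b + (j : ℕ)) % n, Nat.mod_lt _ (by omega)⟩ : Fin n)) hπinj
    rw [Fintype.linearIndependent_iff] at hLI
    have hsumK : ∑ i : Fin n, (fun m => (⟨k m, hk m⟩ : fixedSubfield θ)) i •
        (θ ^ ((b + (i : ℕ)) % n)) α = 0 := by
      calc ∑ i : Fin n, (⟨k i, hk i⟩ : fixedSubfield θ) • (θ ^ ((b + (i : ℕ)) % n)) α
          = ∑ i : Fin n, k i * (θ ^ (b + (i : ℕ))) α := by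
            refine Finset.sum_congr rfl fun i _ => ?_
            have hsm : (⟨k i, hk i⟩ : fixedSubfield θ) • (θ ^ ((b + (i : ℕ)) % n)) α
                = k i * (θ ^ ((b + (i : ℕ)) % n)) α := rfl
            have hp2 := pow_mod_orderOf θ (b + (i : ℕ))
            rw [hord] at hp2
            rw [hsm, hp2]
        _ = 0 := hsum
    intro m
    exact congrArg Subtype.val (hLI (fun m => (⟨k m, hk m⟩ : fixedSubfield θ)) hsumK m)
  -- weight argument
  by_contra hlt
  push_neg at hlt
  set T : Finset (Fin n) := Finset.univ.filter (fun j => c j ≠ 0) with hTdef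
  have hwT : hWt c = T.card := by
    rw [hWt, Set.ncard_eq_toFinset_card']
    congr 1
    ext j
    simp [hTdef]
  have hTlt : T.card < δ := by rw [← hwT]; exact hlt
  have hTne : T.Nonempty := by
    rcases Function.ne_iff.mp hc0 with ⟨j, hj⟩
    exact ⟨j, by simp [hTdef]; simpa using hj⟩
  have heq : ∀ i < T.card, ∑ m ∈ T, c m * ((θ ^ t) ^ i) ((θ ^ (b + (m : ℕ))) α) = 0 := by
    intro i hi
    have hk := key i (by omega)
    have hterm : ∀ m : Fin n,
        ((θ ^ t) ^ i) ((θ ^ (b + (m : ℕ))) α) = (θ ^ (b + i * t + (m : ℕ))) α := by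
      intro m
      rw [← pow_mul]
      have h1 : (θ ^ (t * i)) ((θ ^ (b + (m : ℕ))) α) = (θ ^ (t * i) * θ ^ (b + (m : ℕ))) α :=
        rfl
      have h2 : t * i + (b + (m : ℕ)) = b + i * t + (m : ℕ) := by ring
      rw [h1, ← pow_add, h2]
    calc ∑ m ∈ T, c m * ((θ ^ t) ^ i) ((θ ^ (b + (m : ℕ))) α)
        = ∑ m ∈ T, c m * (θ ^ (b + i * t + (m : ℕ))) α := by
          exact Finset.sum_congr rfl fun m _ => by rw [hterm m]
      _ = ∑ m : Fin n, c m * (θ ^ (b + i * t + (m : ℕ))) α := by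
          refine Finset.sum_subset (Finset.subset_univ T) fun x _ hx => ?_
          have : c x = 0 := by
            by_contra hcx
            exact hx (by simp [hTdef, hcx])
          rw [this, zero_mul]
      _ = 0 := hk
  have hv : ∀ (T' : Finset (Fin n)) (k : Fin n → M), (∀ m, (θ ^ t) (k m) = k m) →
      (∑ m ∈ T', k m * (θ ^ (b + (m : ℕ))) α) = 0 → ∀ m ∈ T', k m = 0 := by
    intro T' k hk hsum m hm
    have hfull : ∑ m : Fin n, (if m ∈ T' then k m else 0) * (θ ^ (b + (m : ℕ))) α = 0 := by
      have hsub : ∑ m ∈ T', (if m ∈ T' then k m else 0) * (θ ^ (b + (m : ℕ))) α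
          = ∑ m : Fin n, (if m ∈ T' then k m else 0) * (θ ^ (b + (m : ℕ))) α :=
        Finset.sum_subset (Finset.subset_univ T') fun x _ hx => by rw [if_neg hx, zero_mul]
      rw [← hsub, ← hsum]
      exact Finset.sum_congr rfl fun x hx => by rw [if_pos hx]
    have hfix : ∀ m, θ ((if m ∈ T' then k m else 0)) = (if m ∈ T' then k m else 0) := by
      intro m
      by_cases h : m ∈ T'
      · simpa only [if_pos h] using hfixθ (k m) (hk m)
      · simpa only [if_neg h] using map_zero θ
    have := hNB (fun m => if m ∈ T' then k m else 0) hfix hfull m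
    rwa [if_pos hm] at this
  have hzero := moore (θ ^ t) T.card (fun m : Fin n => (θ ^ (b + (m : ℕ))) α) hv T rfl c heq
  obtain ⟨j, hj⟩ := hTne
  have hcj : c j ≠ 0 := by
    have := hj
    rw [hTdef, Finset.mem_filter] at this
    exact this.2
  exact hcj (hzero j hj)
end

section
/- Extend π = θ^μ to a ring automorphism of S = M[x;θ] acting coefficientwise (Σ_i a_i x^i ↦ Σ_i π(a_i) x^i); its fixed ring is R = L[x;σ]. Then a nonzero left ideal I = Sf of S is π-invariant (π(I) = I) if and only if I = Sg for some g ∈ R; equivalently, if and only if the monic generator of I lies in R. -/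
/-! Skew polynomials over a field `M` twisted by a ring automorphism `θ` (`x·a = θ(a)·x`),
modeled as finitely supported functions `ℕ →₀ M` (coefficient of `xⁱ` at `i`),
with left-coefficient multiplication `(Σᵢ aᵢ xⁱ)·(Σⱼ bⱼ xʲ) = Σᵢⱼ aᵢ θⁱ(bⱼ) x^{i+j}`. -/

variable {M : Type*} [Field M]

-- basic lemmas

lemma sMul_single_single (θ : M ≃+* M) (i j : ℕ) (a b : M) :
    sMul θ (Finsupp.single i a) (Finsupp.single j b)
      = Finsupp.single (i + j) (a * (θ ^ i) b) := by
  unfold sMul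
  rw [Finsupp.sum_single_index (by simp), Finsupp.sum_single_index (by simp)]

lemma sMul_zero_left (θ : M ≃+* M) (f : ℕ →₀ M) : sMul θ 0 f = 0 := by
  simp [sMul]

lemma sMul_zero_right (θ : M ≃+* M) (f : ℕ →₀ M) : sMul θ f 0 = 0 := by
  simp [sMul]

lemma sMul_add_left (θ : M ≃+* M) (f g h : ℕ →₀ M) :
    sMul θ (f + g) h = sMul θ f h + sMul θ g h := by
  unfold sMul
  rw [Finsupp.sum_add_index'] <;>
    simp [add_mul, Finsupp.single_add, Finsupp.sum_add]

lemma sMul_add_right (θ : M ≃+* M) (f g h : ℕ →₀ M) :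
    sMul θ f (g + h) = sMul θ f g + sMul θ f h := by
  unfold sMul
  rw [← Finsupp.sum_add]
  congr 1
  ext i a
  rw [Finsupp.sum_add_index'] <;> simp [mul_add, Finsupp.single_add]

lemma sMul_assoc (θ : M ≃+* M) (f g h : ℕ →₀ M) :
    sMul θ (sMul θ f g) h = sMul θ f (sMul θ g h) := by
  induction f using Finsupp.induction with
  | zero => simp [sMul_zero_left]
  | single_add i a f hi ha ihf =>
    rw [sMul_add_left, sMul_add_left, sMul_add_left, ihf]
    congr 1
    clear ihf hi ha f
    induction g using Finsupp.induction with
    | zero => simp [sMul_zero_left, sMul_zero_right]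
    | single_add j b g hj hb ihg =>
      rw [sMul_add_right, sMul_add_left, sMul_add_left, sMul_add_right, ihg]
      congr 1
      clear ihg hj hb g
      induction h using Finsupp.induction with
      | zero => simp [sMul_zero_right]
      | single_add k c h hk hc ihh =>
        rw [sMul_add_right, sMul_add_right, sMul_add_right, ihh]
        congr 1
        rw [sMul_single_single, sMul_single_single, sMul_single_single, sMul_single_single,
          add_assoc]
        congr 1
        rw [map_mul, mul_assoc]
        congr 2
        rw [pow_add]
        rfl

lemma smul_single_zero (θ : M ≃+* M) (c : M) (f : ℕ →₀ M) :
    sMul θ (Finsupp.single 0 c) f = c • f := by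
  unfold sMul
  rw [Finsupp.sum_single_index (by simp)]
  conv_rhs => rw [← Finsupp.sum_single f, Finsupp.smul_sum]
  refine Finset.sum_congr rfl fun j hj => ?_
  dsimp only
  rw [zero_add, Finsupp.smul_single, smul_eq_mul]
  rfl

lemma mem_lIdeal_self (θ : M ≃+* M) (f : ℕ →₀ M) : f ∈ lIdeal θ f :=
  ⟨Finsupp.single 0 1, by rw [smul_single_zero, one_smul]⟩

lemma lIdeal_sMul_subset (θ : M ≃+* M) (u f : ℕ →₀ M) :
    lIdeal θ (sMul θ u f) ⊆ lIdeal θ f := by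
  rintro h ⟨q, rfl⟩
  exact ⟨sMul θ q u, by rw [sMul_assoc]⟩

-- degree lemmas

lemma exists_top {f : ℕ →₀ M} (hf : f ≠ 0) :
    ∃ d, f d ≠ 0 ∧ ∀ j, d < j → f j = 0 := by
  have h : f.support.Nonempty := Finsupp.support_nonempty_iff.2 hf
  refine ⟨f.support.max' h, Finsupp.mem_support_iff.1 (f.support.max'_mem h), fun j hj => ?_⟩
  by_contra hj0
  exact absurd (Finset.le_max' _ j (Finsupp.mem_support_iff.2 hj0)) (not_le.2 hj)

lemma sMul_apply_gt (θ : M ≃+* M) {f g : ℕ →₀ M} {d e : ℕ}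
    (hfd : ∀ j, d < j → f j = 0) (hge : ∀ j, e < j → g j = 0)
    {k : ℕ} (hk : d + e < k) : (sMul θ f g) k = 0 := by
  unfold sMul
  rw [Finsupp.sum_apply]
  refine Finset.sum_eq_zero fun i hi => ?_
  have hi' : i ≤ d := by
    by_contra h'
    exact (Finsupp.mem_support_iff.1 hi) (hfd i (by omega))
  dsimp only
  rw [Finsupp.sum_apply]
  refine Finset.sum_eq_zero fun j hj => ?_
  have hj' : j ≤ e := by
    by_contra h'
    exact (Finsupp.mem_support_iff.1 hj) (hge j (by omega))
  dsimp only
  rw [Finsupp.single_apply, if_neg (by omega)]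

lemma sMul_apply_top (θ : M ≃+* M) {f g : ℕ →₀ M} {d e : ℕ}
    (hfd : ∀ j, d < j → f j = 0) (hge : ∀ j, e < j → g j = 0) :
    (sMul θ f g) (d + e) = f d * (θ ^ d) (g e) := by
  unfold sMul
  rw [Finsupp.sum_apply, Finsupp.sum, Finset.sum_eq_single d]
  · rw [Finsupp.sum_apply, Finsupp.sum, Finset.sum_eq_single e]
    · rw [Finsupp.single_apply, if_pos rfl]
    · intro j hj hje
      have hj' : j ≤ e := by
        by_contra h'
        exact (Finsupp.mem_support_iff.1 hj) (hge j (by omega))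
      rw [Finsupp.single_apply, if_neg (by omega)]
    · intro he
      rw [Finsupp.notMem_support_iff] at he
      simp [he]
  · intro i hi hid
    have hi' : i ≤ d := by
      by_contra h'
      exact (Finsupp.mem_support_iff.1 hi) (hfd i (by omega))
    rw [Finsupp.sum_apply]
    refine Finset.sum_eq_zero fun j hj => ?_
    have hj' : j ≤ e := by
      by_contra h'
      exact (Finsupp.mem_support_iff.1 hj) (hge j (by omega))
    dsimp only
    rw [Finsupp.single_apply, if_neg (by omega)]
  · intro hd
    rw [Finsupp.notMem_support_iff] at hd
    simp [hd]

-- uniqueness of monic generator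

lemma monic_gen_unique (θ : M ≃+* M) {h h' : ℕ →₀ M} (mh : IsMonic h) (mh' : IsMonic h')
    (heq : lIdeal θ h = lIdeal θ h') : h = h' := by
  obtain ⟨d, h1, h2⟩ := mh
  obtain ⟨d', h1', h2'⟩ := mh'
  have hne : h ≠ 0 := fun hz => by simp [hz] at h1
  have hne' : h' ≠ 0 := fun hz => by simp [hz] at h1'
  obtain ⟨q, hq⟩ : h ∈ lIdeal θ h' := heq ▸ mem_lIdeal_self θ h
  obtain ⟨q', hq'⟩ : h' ∈ lIdeal θ h := heq ▸ mem_lIdeal_self θ h'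
  have hqne : q ≠ 0 := by
    rintro rfl; rw [sMul_zero_left] at hq; exact hne hq
  have hq'ne : q' ≠ 0 := by
    rintro rfl; rw [sMul_zero_left] at hq'; exact hne' hq'
  obtain ⟨dq, hdq, hdq'⟩ := exists_top hqne
  obtain ⟨dq', hdq2, hdq2'⟩ := exists_top hq'ne
  -- top coefficient of q * h' at dq + d'
  have htop : h (dq + d') ≠ 0 := by
    rw [hq, sMul_apply_top θ hdq' h2', h1', map_one, mul_one]
    exact hdq
  have hle : dq + d' ≤ d := by
    by_contra h'
    exact htop (h2 _ (by omega))
  have htop' : h' (dq' + d) ≠ 0 := by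
    rw [hq', sMul_apply_top θ hdq2' h2, h1, map_one, mul_one]
    exact hdq2
  have hle' : dq' + d ≤ d' := by
    by_contra h'
    exact htop' (h2' _ (by omega))
  have hdq0 : dq = 0 := by omega
  have hdd' : d = d' := by omega
  subst hdq0
  subst hdd'
  have hq_single : q = Finsupp.single 0 (q 0) := by
    ext j
    rcases Nat.eq_zero_or_pos j with rfl | hj
    · simp
    · rw [hdq' j hj, Finsupp.single_apply, if_neg (by omega)]
  have hq01 : q 0 = 1 := by
    have h0 : (sMul θ q h') (0 + d) = q 0 * (θ ^ 0) (h' d) := sMul_apply_top θ hdq' h2'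
    rw [zero_add, ← hq, h1, h1', map_one, mul_one] at h0
    exact h0.symm
  rw [hq, hq_single, hq01, smul_single_zero, one_smul]

-- existence of monic generator

lemma exists_monic_gen (θ : M ≃+* M) {f : ℕ →₀ M} (hf : f ≠ 0) :
    ∃ h, IsMonic h ∧ lIdeal θ h = lIdeal θ f := by
  obtain ⟨d, hd, hd'⟩ := exists_top hf
  refine ⟨(f d)⁻¹ • f, ⟨d, ?_, ?_⟩, ?_⟩
  · rw [Finsupp.smul_apply, smul_eq_mul, inv_mul_cancel₀ hd]
  · intro j hj
    rw [Finsupp.smul_apply, hd' j hj, smul_zero]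
  · apply subset_antisymm
    · rw [← smul_single_zero]
      exact lIdeal_sMul_subset θ _ f
    · have : f = sMul θ (Finsupp.single 0 (f d)) ((f d)⁻¹ • f) := by
        rw [smul_single_zero, smul_smul, mul_inv_cancel₀ hd, one_smul]
      conv_lhs => rw [this]
      exact lIdeal_sMul_subset θ _ _

-- pmap lemmas

lemma pmap_apply (φ : M ≃+* M) (f : ℕ →₀ M) (j : ℕ) : pmap φ f j = φ (f j) :=
  Finsupp.mapRange_apply

lemma pmap_add (φ : M ≃+* M) (f g : ℕ →₀ M) : pmap φ (f + g) = pmap φ f + pmap φ g := by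
  ext j; simp [pmap_apply, map_add]

lemma pmap_zero (φ : M ≃+* M) : pmap φ (0 : ℕ →₀ M) = 0 := by
  ext j; simp [pmap_apply]

lemma pmap_single (φ : M ≃+* M) (i : ℕ) (a : M) :
    pmap φ (Finsupp.single i a) = Finsupp.single i (φ a) := by
  ext j
  rw [pmap_apply, Finsupp.single_apply, Finsupp.single_apply]
  split <;> simp

lemma pmap_symm_pmap (φ : M ≃+* M) (f : ℕ →₀ M) : pmap φ (pmap φ.symm f) = f := by
  ext j; simp [pmap_apply]

lemma pmap_sMul (θ φ : M ≃+* M) (hc : ∀ (k : ℕ) (a : M), φ ((θ ^ k) a) = (θ ^ k) (φ a))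
    (f g : ℕ →₀ M) : pmap φ (sMul θ f g) = sMul θ (pmap φ f) (pmap φ g) := by
  induction f using Finsupp.induction with
  | zero => simp [sMul_zero_left, pmap_zero]
  | single_add i a f hi ha ihf =>
    rw [sMul_add_left, pmap_add, pmap_add, ihf, sMul_add_left]
    congr 1
    clear ihf hi ha f
    induction g using Finsupp.induction with
    | zero => simp [sMul_zero_right, pmap_zero]
    | single_add j b g hj hb ihg =>
      rw [sMul_add_right, pmap_add, ihg, pmap_add, sMul_add_right]
      congr 1
      rw [sMul_single_single, pmap_single, pmap_single, pmap_single, sMul_single_single,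
        map_mul, hc]

lemma pmap_lIdeal (θ φ : M ≃+* M) (hc : ∀ (k : ℕ) (a : M), φ ((θ ^ k) a) = (θ ^ k) (φ a))
    (f : ℕ →₀ M) : pmap φ '' lIdeal θ f = lIdeal θ (pmap φ f) := by
  have hc' : ∀ (k : ℕ) (a : M), φ.symm ((θ ^ k) a) = (θ ^ k) (φ.symm a) := by
    intro k a
    conv_lhs => rw [show a = φ (φ.symm a) from (φ.apply_symm_apply a).symm, ← hc]
    rw [φ.symm_apply_apply]
  ext h
  constructor
  · rintro ⟨-, ⟨q, rfl⟩, rfl⟩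
    exact ⟨pmap φ q, pmap_sMul θ φ hc q f⟩
  · rintro ⟨q, rfl⟩
    refine ⟨sMul θ (pmap φ.symm q) f, ⟨pmap φ.symm q, rfl⟩, ?_⟩
    rw [pmap_sMul θ φ hc, pmap_symm_pmap]

lemma pmap_isMonicAt (φ : M ≃+* M) {h : ℕ →₀ M} {d : ℕ} (hm : IsMonicAt h d) :
    IsMonicAt (pmap φ h) d := by
  refine ⟨by rw [pmap_apply, hm.1, map_one], fun j hj => by rw [pmap_apply, hm.2 j hj, map_zero]⟩

lemma inR_iff_pmap_eq (φ : M ≃+* M) (f : ℕ →₀ M) : inR φ f ↔ pmap φ f = f := by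
  constructor
  · intro h; ext j; rw [pmap_apply, h j]
  · intro h j; rw [← pmap_apply, h]


/-- Setting: `θ` of order `n = μ·s`, `π = θ^μ` extended coefficientwise to
`S = M[x;θ]`, with fixed ring `R = L[x;σ]`, `L = M^π`. A nonzero left ideal `I = S·f` of `S`
is `π`-invariant (`π(I) = I`) if and only if `I = S·g` for some `g ∈ R`; equivalently, if and
only if every monic generator of `I` lies in `R`. -/
theorem pi_invariant_left_ideal_iff {M : Type*} [Field M] (θ : M ≃+* M) (μ s n : ℕ)
    (hμ : 0 < μ) (hs : 0 < s) (hn : n = μ * s) (hord : orderOf θ = n)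
    (f : ℕ →₀ M) (hf : f ≠ 0) :
    ((pmap (θ ^ μ) '' lIdeal θ f = lIdeal θ f) ↔
      ∃ g : ℕ →₀ M, inR (θ ^ μ) g ∧ lIdeal θ f = lIdeal θ g) ∧
    ((pmap (θ ^ μ) '' lIdeal θ f = lIdeal θ f) ↔
      ∀ h : ℕ →₀ M, IsMonic h → lIdeal θ h = lIdeal θ f → inR (θ ^ μ) h) := by

  have hc : ∀ (k : ℕ) (a : M), (θ ^ μ) ((θ ^ k) a) = (θ ^ k) ((θ ^ μ) a) := by
    intro k a
    have h1 : θ ^ μ * θ ^ k = θ ^ k * θ ^ μ := by rw [← pow_add, ← pow_add, add_comm]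
    show (θ ^ μ * θ ^ k) a = (θ ^ k * θ ^ μ) a
    rw [h1]
  obtain ⟨h₀, mh₀, hgen⟩ := exists_monic_gen θ hf
  have step1 : (pmap (θ ^ μ) '' lIdeal θ f = lIdeal θ f) →
      ∀ h : ℕ →₀ M, IsMonic h → lIdeal θ h = lIdeal θ f → inR (θ ^ μ) h := by
    intro hP h mh hg
    have hii : lIdeal θ (pmap (θ ^ μ) h) = lIdeal θ h := by
      rw [← pmap_lIdeal θ _ hc, hg]
      exact hP
    obtain ⟨d, md⟩ := mh
    exact (inR_iff_pmap_eq _ _).2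
      (monic_gen_unique θ ⟨d, pmap_isMonicAt _ md⟩ ⟨d, md⟩ hii)
  have step2 : (∃ g : ℕ →₀ M, inR (θ ^ μ) g ∧ lIdeal θ f = lIdeal θ g) →
      pmap (θ ^ μ) '' lIdeal θ f = lIdeal θ f := by
    rintro ⟨g, hg, hfg⟩
    rw [hfg, pmap_lIdeal θ _ hc, (inR_iff_pmap_eq _ _).1 hg]
  exact ⟨⟨fun hP => ⟨h₀, step1 hP h₀ mh₀ hgen, hgen.symm⟩, step2⟩,
    ⟨step1, fun hall => step2 ⟨h₀, hall h₀ mh₀ hgen, hgen.symm⟩⟩⟩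
end
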